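/- Let Z₁,…,Z_ℓ be binary (0/1-valued) random variables and for each i let pᵢ = Pr(Zᵢ = 1 | Z₁,…,Z_{i−1}). Let Z = ∑ᵢ Zᵢ and B = ∑ᵢ pᵢ. If b ≥ 0 is such that B ≤ b almost surely, then for any δ > 0, Pr(Z > (1+δ)·b) < (e^δ / (1+δ)^{1+δ})^b. -/

import Mathlib

open MeasureTheory

set_option maxHeartbeats 2000000 in
theorem chernoff_upper_dependent
    {Ω : Type*} [MeasurableSpace Ω] (μ : Measure Ω) [IsProbabilityMeasure μ]
    (ℓ : ℕ) (Z : Fin ℓ → Ω → ℝ)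
    (hmeas : ∀ i, Measurable (Z i))
    (hbin : ∀ i ω, Z i ω = 0 ∨ Z i ω = 1)
    (p : Fin ℓ → Ω → ℝ)
    (hp : ∀ i, p i =
      μ[Z i | ⨆ j : Fin ℓ, ⨆ _ : j < i, MeasurableSpace.comap (Z j) inferInstance])
    (b : ℝ) (hb : 0 ≤ b)
    (hB : ∀ᵐ ω ∂μ, (∑ i, p i ω) ≤ b)
    (δ : ℝ) (hδ : 0 < δ) :
    (μ {ω | (∑ i, Z i ω) > (1 + δ) * b}).toReal
      < (Real.exp δ / (1 + δ) ^ (1 + δ)) ^ b := by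
  classical
  set F : Fin ℓ → MeasurableSpace Ω :=
    fun i => ⨆ j : Fin ℓ, ⨆ _ : j < i, MeasurableSpace.comap (Z j) inferInstance with hFdef
  have hFle : ∀ i, F i ≤ ‹MeasurableSpace Ω› :=
    fun i => iSup₂_le fun j _ => (hmeas j).comap_le
  have hFmono : ∀ {j i : Fin ℓ}, j ≤ i → F j ≤ F i := by
    intro j i hji
    simp only [hFdef]
    exact iSup₂_le fun k hk =>
      le_iSup₂_of_le (f := fun (k : Fin ℓ) (_ : k < i) =>
        MeasurableSpace.comap (Z k) inferInstance) k (lt_of_lt_of_le hk hji) le_rfl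
  have hZF : ∀ {j i : Fin ℓ}, j < i → StronglyMeasurable[F i] (Z j) := by
    intro j i hji
    apply Measurable.stronglyMeasurable
    rw [measurable_iff_comap_le, hFdef]
    exact le_iSup₂ (f := fun (k : Fin ℓ) (_ : k < i) =>
      MeasurableSpace.comap (Z k) inferInstance) j hji
  have hZ01 : ∀ i ω, 0 ≤ Z i ω ∧ Z i ω ≤ 1 := by
    intro i ω; rcases hbin i ω with h | h <;> simp [h]
  have hZint : ∀ i, Integrable (Z i) μ := fun i =>
    (integrable_const (1 : ℝ)).mono' (hmeas i).aestronglyMeasurable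
      (Filter.Eventually.of_forall fun ω => by
        rcases hbin i ω with h | h <;> simp [h])
  have hpF : ∀ i, StronglyMeasurable[F i] (p i) := fun i => (hp i) ▸ stronglyMeasurable_condExp
  have hpm : ∀ i, StronglyMeasurable (p i) := fun i => (hpF i).mono (hFle i)
  have hp0 : ∀ i, 0 ≤ᵐ[μ] p i := fun i => (hp i) ▸ condExp_nonneg
    (Filter.Eventually.of_forall fun ω => (hZ01 i ω).1)
  have hp1 : ∀ i, p i ≤ᵐ[μ] fun _ => (1 : ℝ) := by
    intro i
    rw [hp i]
    have h1 := condExp_mono (m := F i) (μ := μ) (hZint i) (integrable_const (1 : ℝ))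
      (Filter.Eventually.of_forall fun ω => (hZ01 i ω).2)
    have h2 := condExp_const (hFle i) (1 : ℝ) (μ := μ)
    exact h2 ▸ h1
  have hpae : ∀ᵐ ω ∂μ, ∀ i, 0 ≤ p i ω ∧ p i ω ≤ 1 :=
    ae_all_iff.mpr fun i => (hp0 i).and (hp1 i)
  -- the supermartingale-like partial products
  set P : ℕ → Ω → ℝ := fun k ω =>
    ∏ j ∈ Finset.univ.filter (fun j : Fin ℓ => (j : ℕ) < k),
      ((1 + δ * Z j ω) * Real.exp (-(δ * p j ω))) with hPdef
  have hfacnn : ∀ (j : Fin ℓ) ω, 0 ≤ (1 + δ * Z j ω) * Real.exp (-(δ * p j ω)) := fun j ω =>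
    mul_nonneg (by nlinarith [(hZ01 j ω).1]) (Real.exp_nonneg _)
  have hPnn : ∀ k ω, 0 ≤ P k ω := fun k ω => Finset.prod_nonneg fun j _ => hfacnn j ω
  have hPmF : ∀ (k : ℕ) (i : Fin ℓ), k ≤ (i : ℕ) → StronglyMeasurable[F i] (P k) := by
    intro k i hki
    apply Finset.stronglyMeasurable_fun_prod
    intro j hj
    have hji : j < i := by
      have := (Finset.mem_filter.mp hj).2
      exact Fin.lt_def.mpr (lt_of_lt_of_le this hki)
    exact ((stronglyMeasurable_const.add (stronglyMeasurable_const.mul (hZF hji))).mul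
      (Real.continuous_exp.comp_stronglyMeasurable
        ((stronglyMeasurable_const.mul ((hpF j).mono (hFmono hji.le))).neg)))
  have hPm : ∀ k, StronglyMeasurable (P k) := by
    intro k
    apply Finset.stronglyMeasurable_fun_prod
    intro j _
    exact ((stronglyMeasurable_const.add
      (stronglyMeasurable_const.mul (hmeas j).stronglyMeasurable)).mul
      (Real.continuous_exp.comp_stronglyMeasurable
        ((stronglyMeasurable_const.mul (hpm j)).neg)))
  have hPbd : ∀ k, ∀ᵐ ω ∂μ, ‖P k ω‖ ≤ (1 + δ) ^ ℓ := by
    intro k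
    filter_upwards [hpae] with ω hω
    rw [Real.norm_eq_abs, abs_of_nonneg (hPnn k ω)]
    calc P k ω ≤ ∏ _j ∈ Finset.univ.filter (fun j : Fin ℓ => (j : ℕ) < k), (1 + δ) := by
          apply Finset.prod_le_prod (fun j _ => hfacnn j ω)
          intro j _
          have h1 : 1 + δ * Z j ω ≤ 1 + δ := by nlinarith [(hZ01 j ω).2]
          have h2 : Real.exp (-(δ * p j ω)) ≤ 1 :=
            Real.exp_le_one_iff.mpr (by nlinarith [(hω j).1])
          nlinarith [(hZ01 j ω).1, Real.exp_nonneg (-(δ * p j ω))]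
      _ = (1 + δ) ^ (Finset.univ.filter (fun j : Fin ℓ => (j : ℕ) < k)).card :=
          Finset.prod_const _
      _ ≤ (1 + δ) ^ ℓ := by
          apply pow_le_pow_right₀ (by linarith)
          calc (Finset.univ.filter (fun j : Fin ℓ => (j : ℕ) < k)).card
              ≤ (Finset.univ : Finset (Fin ℓ)).card := Finset.card_filter_le _ _
            _ = ℓ := by simp
  have hPint : ∀ k, Integrable (P k) μ := fun k =>
    (integrable_const ((1 + δ) ^ ℓ)).mono' (hPm k).aestronglyMeasurable (hPbd k)
  -- key induction
  have key : ∀ k, ∫ ω, P k ω ∂μ ≤ 1 := by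
    intro k
    induction k with
    | zero =>
        have : P 0 = fun _ => (1 : ℝ) := by
          funext ω; rw [hPdef]; simp
        rw [this]; simp
    | succ k ih =>
        by_cases hk : k < ℓ
        · set i : Fin ℓ := ⟨k, hk⟩ with hi
          have hsplit : ∀ ω, P (k + 1) ω
              = (Real.exp (-(δ * p i ω)) * P k ω) * (1 + δ * Z i ω) := by
            intro ω
            have hset : Finset.univ.filter (fun j : Fin ℓ => (j : ℕ) < k + 1)
                = insert i (Finset.univ.filter (fun j : Fin ℓ => (j : ℕ) < k)) := by
              ext j
              simp only [Finset.mem_filter, Finset.mem_univ, true_and, Finset.mem_insert]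
              constructor
              · intro hj
                rcases Nat.lt_succ_iff_lt_or_eq.mp hj with h | h
                · exact Or.inr h
                · exact Or.inl (Fin.ext h)
              · rintro (h | h)
                · rw [h]; exact Nat.lt_succ_self k
                · exact Nat.lt_succ_of_lt h
            rw [hPdef]
            simp only
            rw [hset, Finset.prod_insert (by simp [hi])]
            ring
          set G : Ω → ℝ := fun ω => Real.exp (-(δ * p i ω)) * P k ω with hG
          have hGF : StronglyMeasurable[F i] G :=
            (Real.continuous_exp.comp_stronglyMeasurable
              ((stronglyMeasurable_const.mul (hpF i)).neg)).mul (hPmF k i le_rfl)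
          have hPk1eq : (fun ω => G ω * (1 + δ * Z i ω)) = P (k + 1) :=
            funext fun ω => (hsplit ω).symm
          have hmulint : Integrable (fun ω => G ω * (1 + δ * Z i ω)) μ := by
            rw [hPk1eq]; exact hPint (k + 1)
          have hZi_int : Integrable (fun ω => 1 + δ * Z i ω) μ :=
            (integrable_const (1 : ℝ)).add ((hZint i).const_mul δ)
          have hcond1 : μ[(fun ω => 1 + δ * Z i ω)|F i] =ᵐ[μ] fun ω => 1 + δ * p i ω := by
            have ha : (fun ω => 1 + δ * Z i ω) = (fun _ => (1 : ℝ)) + δ • Z i := by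
              funext ω; simp [Pi.add_apply]
            rw [ha]
            refine (condExp_add (integrable_const 1) ((hZint i).smul δ) (F i)).trans ?_
            have hc : μ[(fun _ => (1 : ℝ))|F i] = fun _ => (1 : ℝ) := condExp_const (hFle i) 1
            have hs : μ[δ • Z i|F i] =ᵐ[μ] δ • μ[Z i|F i] := condExp_smul δ (Z i) (F i)
            filter_upwards [hs] with ω hω
            simp only [Pi.add_apply, hc, hω, Pi.smul_apply, smul_eq_mul]
            rw [hp i]
          have hpull : μ[(fun ω => G ω * (1 + δ * Z i ω))|F i]
              =ᵐ[μ] fun ω => G ω * (1 + δ * p i ω) := by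
            have h1 : μ[G * (fun ω => 1 + δ * Z i ω)|F i]
                =ᵐ[μ] G * μ[(fun ω => 1 + δ * Z i ω)|F i] :=
              condExp_mul_of_stronglyMeasurable_left hGF hmulint hZi_int
            refine h1.trans ?_
            filter_upwards [hcond1] with ω hω
            simp [hω]
          have hcondint : Integrable (fun ω => G ω * (1 + δ * p i ω)) μ :=
            integrable_condExp.congr hpull
          have hle : (fun ω => G ω * (1 + δ * p i ω)) ≤ᵐ[μ] P k := by
            filter_upwards [hpae] with ω hω
            have h0 : 0 ≤ δ * p i ω := mul_nonneg hδ.le (hω i).1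
            have hkey : Real.exp (-(δ * p i ω)) * (1 + δ * p i ω) ≤ 1 := by
              have h1 : 1 + δ * p i ω ≤ Real.exp (δ * p i ω) := by
                have := Real.add_one_le_exp (δ * p i ω); linarith
              calc Real.exp (-(δ * p i ω)) * (1 + δ * p i ω)
                  ≤ Real.exp (-(δ * p i ω)) * Real.exp (δ * p i ω) :=
                    mul_le_mul_of_nonneg_left h1 (Real.exp_nonneg _)
                _ = 1 := by rw [← Real.exp_add]; simp
            calc G ω * (1 + δ * p i ω)
                = P k ω * (Real.exp (-(δ * p i ω)) * (1 + δ * p i ω)) := by rw [hG]; ring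
              _ ≤ P k ω * 1 := mul_le_mul_of_nonneg_left hkey (hPnn k ω)
              _ = P k ω := mul_one _
          calc ∫ ω, P (k + 1) ω ∂μ
              = ∫ ω, G ω * (1 + δ * Z i ω) ∂μ := by rw [hPk1eq]
            _ = ∫ ω, (μ[(fun ω => G ω * (1 + δ * Z i ω))|F i]) ω ∂μ :=
                (integral_condExp (hFle i)).symm
            _ = ∫ ω, G ω * (1 + δ * p i ω) ∂μ := integral_congr_ae hpull
            _ ≤ ∫ ω, P k ω ∂μ := integral_mono_ae hcondint (hPint k) hle
            _ ≤ 1 := ih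
        · have : P (k + 1) = P k := by
            funext ω
            rw [hPdef]
            simp only
            congr 1
            ext j
            simp only [Finset.mem_filter, Finset.mem_univ, true_and]
            have := j.2
            omega
          rw [this]; exact ih
  -- pass to X
  set X : Ω → ℝ := fun ω => ∏ j, (1 + δ * Z j ω) with hX
  have hXnn : ∀ ω, 0 ≤ X ω := fun ω =>
    Finset.prod_nonneg fun j _ => by nlinarith [(hZ01 j ω).1]
  have hXbd : ∀ ω, ‖X ω‖ ≤ (1 + δ) ^ ℓ := by
    intro ω
    rw [Real.norm_eq_abs, abs_of_nonneg (hXnn ω)]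
    calc X ω ≤ ∏ _j : Fin ℓ, (1 + δ) := by
          apply Finset.prod_le_prod (fun j _ => by nlinarith [(hZ01 j ω).1])
          intro j _; nlinarith [(hZ01 j ω).2]
      _ = (1 + δ) ^ ℓ := by rw [Finset.prod_const]; simp
  have hXint : Integrable X μ :=
    (integrable_const ((1 + δ) ^ ℓ)).mono'
      (Finset.stronglyMeasurable_fun_prod _ fun j _ =>
        stronglyMeasurable_const.add
          (stronglyMeasurable_const.mul (hmeas j).stronglyMeasurable)).aestronglyMeasurable
      (Filter.Eventually.of_forall hXbd)
  have hXP : ∀ᵐ ω ∂μ, X ω ≤ P ℓ ω * Real.exp (δ * b) := by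
    filter_upwards [hB] with ω hω
    have hfil : Finset.univ.filter (fun j : Fin ℓ => (j : ℕ) < ℓ) = Finset.univ := by
      ext j; simp [j.2]
    have hPeq : P ℓ ω = X ω * Real.exp (-(δ * ∑ j, p j ω)) := by
      rw [hPdef]
      simp only
      rw [hfil, Finset.prod_mul_distrib, hX]
      congr 1
      rw [← Real.exp_sum]
      congr 1
      rw [Finset.mul_sum]
      simp
    have hXeq : X ω = P ℓ ω * Real.exp (δ * ∑ j, p j ω) := by
      rw [hPeq, mul_assoc, ← Real.exp_add]
      simp
    rw [hXeq]
    exact mul_le_mul_of_nonneg_left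
      (Real.exp_le_exp.mpr (by nlinarith)) (hPnn ℓ ω)
  have hXle : ∫ ω, X ω ∂μ ≤ Real.exp (δ * b) := by
    calc ∫ ω, X ω ∂μ ≤ ∫ ω, P ℓ ω * Real.exp (δ * b) ∂μ :=
          integral_mono_ae hXint ((hPint ℓ).mul_const _) hXP
      _ = (∫ ω, P ℓ ω ∂μ) * Real.exp (δ * b) := integral_mul_const _ _
      _ ≤ 1 * Real.exp (δ * b) :=
          mul_le_mul_of_nonneg_right (key ℓ) (Real.exp_nonneg _)
      _ = Real.exp (δ * b) := one_mul _
  -- Markov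
  have h1δ : (1 : ℝ) < 1 + δ := by linarith
  set N : ℕ := ⌊(1 + δ) * b⌋₊ + 1 with hN
  have hXnat : ∀ ω, ∃ n : ℕ, (∑ j, Z j ω) = n ∧ X ω = (1 + δ) ^ n := by
    intro ω
    rw [hX]
    simp only
    induction (Finset.univ : Finset (Fin ℓ)) using Finset.cons_induction with
    | empty => exact ⟨0, by simp⟩
    | cons j s hjs ih =>
        obtain ⟨n, hn1, hn2⟩ := ih
        rw [Finset.sum_cons, Finset.prod_cons, hn1, hn2]
        rcases hbin j ω with h | h
        · exact ⟨n, by simp [h]⟩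
        · exact ⟨n + 1, by constructor <;> (simp [h]; ring)⟩
  have hsub : {ω | (∑ i, Z i ω) > (1 + δ) * b} ⊆ {ω | (1 + δ) ^ (N : ℝ) ≤ X ω} := by
    intro ω hω
    obtain ⟨n, hn1, hn2⟩ := hXnat ω
    have hbn : (1 + δ) * b < n := by rw [← hn1]; exact hω
    have hNn : N ≤ n := by
      rw [hN]
      have : ⌊(1 + δ) * b⌋₊ < n := (Nat.floor_lt (mul_nonneg (by linarith) hb)).mpr hbn
      omega
    simp only [Set.mem_setOf_eq, hn2]
    calc (1 + δ) ^ (N : ℝ) ≤ (1 + δ) ^ (n : ℝ) :=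
          (Real.rpow_le_rpow_left_iff h1δ).mpr (by exact_mod_cast hNn)
      _ = (1 + δ) ^ n := Real.rpow_natCast _ _
  set K' : ℝ := (1 + δ) ^ (N : ℝ) with hK'
  have hK'pos : 0 < K' := Real.rpow_pos_of_pos (by linarith) _
  have hmar := mul_meas_ge_le_integral_of_nonneg
    (Filter.Eventually.of_forall hXnn) hXint K'
  have hμmono : (μ {ω | (∑ i, Z i ω) > (1 + δ) * b}).toReal
      ≤ (μ {x | K' ≤ X x}).toReal :=
    ENNReal.toReal_mono (measure_ne_top _ _) (measure_mono hsub)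
  have hfin1 : K' * (μ {ω | (∑ i, Z i ω) > (1 + δ) * b}).toReal ≤ Real.exp (δ * b) := by
    calc K' * (μ {ω | (∑ i, Z i ω) > (1 + δ) * b}).toReal
        ≤ K' * (μ {x | K' ≤ X x}).toReal := mul_le_mul_of_nonneg_left hμmono hK'pos.le
      _ ≤ ∫ ω, X ω ∂μ := hmar
      _ ≤ Real.exp (δ * b) := hXle
  have h2 : (μ {ω | (∑ i, Z i ω) > (1 + δ) * b}).toReal ≤ Real.exp (δ * b) / K' := by
    rw [le_div_iff₀ hK'pos]
    linarith [hfin1]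
  have hKK : (1 + δ) ^ ((1 + δ) * b) < K' := by
    rw [hK']
    apply (Real.rpow_lt_rpow_left_iff h1δ).mpr
    have := Nat.lt_floor_add_one ((1 + δ) * b)
    rw [hN]
    push_cast
    linarith
  have hRHS : (Real.exp δ / (1 + δ) ^ (1 + δ)) ^ b
      = Real.exp (δ * b) / (1 + δ) ^ ((1 + δ) * b) := by
    rw [Real.div_rpow (Real.exp_nonneg _) (Real.rpow_nonneg (by linarith) _),
      ← Real.exp_mul, ← Real.rpow_mul (by linarith)]
  rw [hRHS]
  calc (μ {ω | (∑ i, Z i ω) > (1 + δ) * b}).toReal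
      ≤ Real.exp (δ * b) / K' := h2
    _ < Real.exp (δ * b) / (1 + δ) ^ ((1 + δ) * b) :=
        div_lt_div_of_pos_left (Real.exp_pos _)
          (Real.rpow_pos_of_pos (by linarith) _) hKK
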